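/- For all positive integers e and all integers g ≥ 0, the number m_1(e, g) of equivalence classes of rooted ribbon graphs of genus g with e edges satisfies m_1(e, g) = Σ_{n=1}^{e+1} (2e/n!) Σ_{μ1+⋯+μn=2e, μi ≥ 1} C_{g,n}(μ1, …, μn)/(μ1⋯μn), where the inner sum is over all ordered n-tuples of positive integers summing to 2e and the equality holds in ℚ. -/

import Mathlib

/-- The number of cycles (orbits, including fixed points) of a permutation. -/
noncomputable def permCycleCount {H : Type*} (σ : Equiv.Perm H) : ℕ :=
  Nat.card (Quot σ.SameCycle)

/-- A decorated marked ribbon graph (map) of genus `g` with `n` labeled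
vertices, vertex `i` having degree `μ i`.  The set of half-edges is
`Fin (∑ i, μ i)`; `α` is the fixed-point-free edge involution; `σ` is the
vertex permutation; `v` assigns to a half-edge its vertex label (the fibers of
`v` are exactly the cycles of `σ`, the fiber of `i` having `μ i` elements);
`dec i` is the chosen (decorating) half-edge at vertex `i`.  The genus
condition is the Euler relation `n' - e + f = 2 - 2g` (multiplied by 2, with
`2e = ∑ μ i`). -/
structure DecMap (g n : ℕ) (μ : Fin n → ℕ) where
  α : Equiv.Perm (Fin (∑ i, μ i))
  σ : Equiv.Perm (Fin (∑ i, μ i))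
  hinv : ∀ h, α (α h) = h
  hfpf : ∀ h, α h ≠ h
  htrans : ∀ h h', ∃ p ∈ Subgroup.closure ({α, σ} : Set (Equiv.Perm (Fin (∑ i, μ i)))), p h = h'
  v : Fin (∑ i, μ i) → Fin n
  hvσ : ∀ h, v (σ h) = v h
  horb : ∀ h h', v h = v h' → σ.SameCycle h h'
  hdeg : ∀ i, (Finset.univ.filter fun h => v h = i).card = μ i
  dec : Fin n → Fin (∑ i, μ i)
  hdec : ∀ i, v (dec i) = i
  hgenus : 2 * (permCycleCount σ : ℤ) - (∑ i, μ i : ℤ) + 2 * (permCycleCount (σ⁻¹ * α) : ℤ)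
      = 4 - 4 * g

/-- Marked isomorphism of decorated marked graphs: a relabeling of the
half-edges intertwining the `α`'s and `σ`'s, fixing each vertex label and
carrying chosen half-edges to chosen half-edges. -/
def DecMapRel (g n : ℕ) (μ : Fin n → ℕ) : DecMap g n μ → DecMap g n μ → Prop :=
  fun Γ Γ' => ∃ ψ : Equiv.Perm (Fin (∑ i, μ i)),
    ψ * Γ.α = Γ'.α * ψ ∧ ψ * Γ.σ = Γ'.σ * ψ ∧
    (∀ h, Γ'.v (ψ h) = Γ.v h) ∧ (∀ i, ψ (Γ.dec i) = Γ'.dec i)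

/-- `Cgn g n μ` : the number of equivalence classes of decorated marked ribbon
graphs of genus `g` with `n` vertices of respective degrees `μ 0, …, μ (n-1)`. -/
noncomputable def Cgn (g n : ℕ) (μ : Fin n → ℕ) : ℕ :=
  Nat.card (Quot (DecMapRel g n μ))

/-- The double factorial. -/
def dfact : ℕ → ℕ
  | 0 => 1
  | 1 => 1
  | n + 2 => (n + 2) * dfact n

/-- `gfun μ = 2^⌊μ/2⌋ (2⌊(μ-1)/2⌋+1)!! / ⌊(μ-1)/2⌋!` for `μ ≥ 1`. -/
def gfun (μ : ℕ) : ℚ :=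
  2 ^ (μ / 2) * dfact (2 * ((μ - 1) / 2) + 1) / Nat.factorial ((μ - 1) / 2)

/-- The compositions of `m` into `n` strictly positive parts, as a finset of
ordered `n`-tuples. -/
def comps (n m : ℕ) : Finset (Fin n → ℕ) :=
  (Finset.Nat.antidiagonalTuple n m).filter fun μ => ∀ i, 1 ≤ μ i

/-- A rooted ribbon graph of genus `g` with `e` edges: a ribbon graph `(α, σ)`
satisfying the Euler relation `n - e + f = 2 - 2g`, together with a
distinguished root half-edge. -/
structure RootedMap (e g : ℕ) where
  α : Equiv.Perm (Fin (2 * e))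
  σ : Equiv.Perm (Fin (2 * e))
  hinv : ∀ h, α (α h) = h
  hfpf : ∀ h, α h ≠ h
  htrans : ∀ h h', ∃ p ∈ Subgroup.closure ({α, σ} : Set (Equiv.Perm (Fin (2 * e)))), p h = h'
  hgenus : (permCycleCount σ : ℤ) - e + permCycleCount (σ⁻¹ * α) = 2 - 2 * g
  root : Fin (2 * e)

/-- Rooted isomorphism: an isomorphism of ribbon graphs carrying root to root. -/
def RootedMapRel (e g : ℕ) : RootedMap e g → RootedMap e g → Prop :=
  fun Γ Γ' => ∃ ψ : Equiv.Perm (Fin (2 * e)),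
    ψ * Γ.α = Γ'.α * ψ ∧ ψ * Γ.σ = Γ'.σ * ψ ∧ ψ Γ.root = Γ'.root

/-- `m1 e g` : the number of equivalence classes of rooted ribbon graphs of
genus `g` with `e` edges. -/
noncomputable def m1 (e g : ℕ) : ℕ := Nat.card (Quot (RootedMapRel e g))


/-! ### Auxiliary machinery -/

open Equiv Finset

section PcmAux
variable {H H' : Type*}

/-- `permCongr` as a `MulEquiv`. -/
def pcm (c : H ≃ H') : Equiv.Perm H ≃* Equiv.Perm H' :=
  { c.permCongr with map_mul' := fun p q => by ext x; simp }

@[simp] lemma pcm_apply (c : H ≃ H') (p : Equiv.Perm H) (x : H') :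
    pcm c p x = c (p (c.symm x)) := rfl

lemma pcm_perm (ψ p : Equiv.Perm H) : pcm ψ p = ψ * p * ψ⁻¹ :=
  Equiv.permCongr_eq_mul ψ p

@[simp] lemma pcm_symm_pcm (c : H ≃ H') (p : Equiv.Perm H) : pcm c.symm (pcm c p) = p := by
  ext x; simp

@[simp] lemma pcm_pcm_symm (c : H ≃ H') (p : Equiv.Perm H') : pcm c (pcm c.symm p) = p := by
  ext x; simp

lemma sameCycle_pcm_iff (c : H ≃ H') (σ : Equiv.Perm H) (a b : H) :
    (pcm c σ).SameCycle (c a) (c b) ↔ σ.SameCycle a b := by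
  have key : ∀ k : ℤ, ∀ x, ((pcm c σ) ^ k) (c x) = c ((σ ^ k) x) := by
    intro k x
    rw [← map_zpow (pcm c) σ k]
    simp only [pcm_apply, Equiv.symm_apply_apply]
  constructor
  · rintro ⟨k, hk⟩
    refine ⟨k, c.injective ?_⟩
    rw [← key k a, hk]
  · rintro ⟨k, hk⟩
    exact ⟨k, by rw [key k a, hk]⟩

/-- Quotients by same-cycle relations are equivalent under conjugation. -/
def sameCycleQuotCongr (c : H ≃ H') (σ : Equiv.Perm H) :
    Quot σ.SameCycle ≃ Quot (pcm c σ).SameCycle :=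
  Quot.congr c fun a b => (sameCycle_pcm_iff c σ a b).symm

lemma permCycleCount_pcm (c : H ≃ H') (σ : Equiv.Perm H) :
    permCycleCount (pcm c σ) = permCycleCount σ :=
  (Nat.card_congr (sameCycleQuotCongr c σ)).symm

lemma permCycleCount_conj (ψ σ : Equiv.Perm H) :
    permCycleCount (ψ * σ * ψ⁻¹) = permCycleCount σ := by
  rw [← pcm_perm]; exact permCycleCount_pcm ψ σ

lemma mem_closure_pair_pcm (c : H ≃ H') {α σ p : Equiv.Perm H}
    (hp : p ∈ Subgroup.closure ({α, σ} : Set (Equiv.Perm H))) :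
    pcm c p ∈ Subgroup.closure ({pcm c α, pcm c σ} : Set (Equiv.Perm H')) := by
  have := Subgroup.mem_map_of_mem (pcm c).toMonoidHom hp
  rw [MonoidHom.map_closure] at this
  simpa [Set.image_pair] using this

lemma hinv_pcm {α : Equiv.Perm H} (h : ∀ x, α (α x) = x) (c : H ≃ H') :
    ∀ x, pcm c α (pcm c α x) = x := fun x => by simp [h]

lemma hfpf_pcm {α : Equiv.Perm H} (h : ∀ x, α x ≠ x) (c : H ≃ H') :
    ∀ x, pcm c α x ≠ x := fun x hc =>
  h (c.symm x) ((Equiv.eq_symm_apply c).mpr (by simpa using hc))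

lemma htrans_pcm {α σ : Equiv.Perm H}
    (ht : ∀ h h', ∃ p ∈ Subgroup.closure ({α, σ} : Set (Equiv.Perm H)), p h = h')
    (c : H ≃ H') :
    ∀ h h', ∃ p ∈ Subgroup.closure ({pcm c α, pcm c σ} : Set (Equiv.Perm H')), p h = h' := by
  intro h h'
  obtain ⟨p, hp, hpx⟩ := ht (c.symm h) (c.symm h')
  exact ⟨pcm c p, mem_closure_pair_pcm c hp, by simp [hpx]⟩

lemma pcm_inv_mul (c : H ≃ H') (σ α : Equiv.Perm H) :
    (pcm c σ)⁻¹ * pcm c α = pcm c (σ⁻¹ * α) := by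
  rw [map_mul, map_inv]

lemma conj_inv_mul (ψ σ α : Equiv.Perm H) :
    (ψ * σ * ψ⁻¹)⁻¹ * (ψ * α * ψ⁻¹) = ψ * (σ⁻¹ * α) * ψ⁻¹ := by
  group

/-- A permutation commuting with `α` and `σ`, fixing a point, with `⟨α,σ⟩` transitive,
is the identity. -/
lemma perm_eq_one_of_commute_fix {α σ ψ : Equiv.Perm H}
    (htrans : ∀ h h', ∃ p ∈ Subgroup.closure ({α, σ} : Set (Equiv.Perm H)), p h = h')
    (h1 : ψ * α = α * ψ) (h2 : ψ * σ = σ * ψ) {h0 : H} (hfix : ψ h0 = h0) : ψ = 1 := by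
  have hcomm : ∀ p ∈ Subgroup.closure ({α, σ} : Set (Equiv.Perm H)), ψ * p = p * ψ := by
    intro p hp
    induction hp using Subgroup.closure_induction with
    | mem x hx =>
      rcases hx with rfl | hx
      · exact h1
      · rw [Set.mem_singleton_iff] at hx; subst hx; exact h2
    | one => simp
    | mul x y hx hy ihx ihy =>
      calc ψ * (x * y) = (x * ψ) * y := by rw [← mul_assoc, ihx]
        _ = x * y * ψ := by rw [mul_assoc, ihy, mul_assoc]
    | inv x hx ihx => exact (Commute.inv_right ihx : _)
  ext x
  obtain ⟨p, hp, hpx⟩ := htrans h0 x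
  have happ : (ψ * p) h0 = (p * ψ) h0 := by rw [hcomm p hp]
  simp only [Equiv.Perm.mul_apply] at happ
  rw [hfix] at happ
  calc ψ x = ψ (p h0) := by rw [hpx]
    _ = p h0 := happ
    _ = x := hpx
  
lemma v_const_of_sameCycle {β : Type*} {σ : Equiv.Perm H} {v : H → β}
    (hvσ : ∀ h, v (σ h) = v h) : ∀ a b, σ.SameCycle a b → v a = v b := by
  have hz : ∀ (k : ℤ) (x : H), v ((σ ^ k) x) = v x := by
    intro k
    induction k using Int.induction_on with
    | zero => simp
    | succ i ih =>
      intro x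
      have : σ ^ ((i : ℤ) + 1) = σ ^ (i : ℤ) * σ := by rw [zpow_add_one]
      rw [this, Equiv.Perm.mul_apply, ih, hvσ]
    | pred i ih =>
      intro x
      have : σ ^ (-(i : ℤ) - 1) = σ ^ (-(i : ℤ)) * σ⁻¹ := by rw [zpow_sub_one]
      have hvi : v (σ⁻¹ x) = v x := by
        conv_rhs => rw [← (Equiv.apply_symm_apply σ x : σ (σ⁻¹ x) = x)]
        rw [hvσ]; rfl
      rw [this, Equiv.Perm.mul_apply, ih, hvi]
  rintro a b ⟨k, hk⟩
  rw [← hk, hz]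

lemma sameCycle_of_quot_eq {σ : Equiv.Perm H} {a b : H}
    (h : Quot.mk σ.SameCycle a = Quot.mk σ.SameCycle b) : σ.SameCycle a b := by
  have := Quot.eqvGen_exact h
  rwa [Equivalence.eqvGen_iff
    ⟨fun x => Equiv.Perm.SameCycle.refl σ x, Equiv.Perm.SameCycle.symm,
      Equiv.Perm.SameCycle.trans⟩] at this

end PcmAux

section CountAux

lemma card_eq_sum_fiber {A B : Type*} [Finite A] [DecidableEq B] (f : A → B) (S : Finset B)
    (h : ∀ a, f a ∈ S) : Nat.card A = ∑ b ∈ S, Nat.card {a // f a = b} := by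
  classical
  cases nonempty_fintype A
  rw [Nat.card_eq_fintype_card, ← Finset.card_univ,
    Finset.card_eq_sum_card_fiberwise (fun a _ => h a)]
  refine Finset.sum_congr rfl fun b _ => ?_
  rw [Nat.card_eq_fintype_card, Fintype.card_subtype]

lemma card_sigma_const {ι : Type*} [Finite ι] {F : ι → Type*} [∀ i, Finite (F i)] (k : ℕ)
    (h : ∀ i, Nat.card (F i) = k) : Nat.card (Σ i, F i) = Nat.card ι * k := by
  classical
  cases nonempty_fintype ι
  letI : ∀ i, Fintype (F i) := fun i => Fintype.ofFinite _
  rw [Nat.card_eq_fintype_card, Fintype.card_sigma, Nat.card_eq_fintype_card]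
  calc ∑ i : ι, Fintype.card (F i) = ∑ _i : ι, k :=
        Finset.sum_congr rfl fun i _ => by rw [← Nat.card_eq_fintype_card, h i]
    _ = Fintype.card ι * k := by rw [Finset.sum_const, Finset.card_univ, smul_eq_mul]

lemma card_eq_card_fiber_mul {A B : Type*} [Finite A] [Finite B] (f : A → B) (k : ℕ)
    (h : ∀ b : B, Nat.card {a // f a = b} = k) : Nat.card A = Nat.card B * k := by
  rw [← card_sigma_const k h, Nat.card_congr (Equiv.sigmaFiberEquiv f)]

/-- Counting orbits of a free action. -/
lemma card_quot_free {G X : Type*} [Group G] [Finite G] [Finite X] [MulAction G X]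
    (free : ∀ (g : G) (x : X), g • x = x → g = 1) :
    Nat.card (Quot fun x y : X => ∃ g : G, g • x = y) * Nat.card G = Nat.card X := by
  classical
  have e1 : (Quot fun x y : X => ∃ g : G, g • x = y) ≃ MulAction.orbitRel.Quotient G X :=
    Quot.congrRight fun a b =>
      ⟨fun ⟨g, hg⟩ => ⟨g⁻¹, by subst hg; simp⟩,
       fun ⟨g, hg⟩ => ⟨g⁻¹, by subst hg; simp⟩⟩
  have hstab : ∀ x : X, MulAction.stabilizer G x = ⊥ := by
    intro x
    ext g
    simp only [MulAction.mem_stabilizer_iff, Subgroup.mem_bot]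
    exact ⟨free g x, by rintro rfl; simp⟩
  have e2 := MulAction.selfEquivSigmaOrbitsQuotientStabilizer G X
  rw [← Nat.card_congr e2.symm, Nat.card_congr e1]
  exact (card_sigma_const (Nat.card G) fun ω => by
    rw [hstab]; exact Nat.card_congr QuotientGroup.quotientBot.toEquiv).symm

end CountAux


/-! ### Intermediate structures -/

/-- A (connected, genus-`g`) ribbon graph on `Fin (2*e)` without root. -/
structure PairMap (e g : ℕ) where
  α : Equiv.Perm (Fin (2 * e))
  σ : Equiv.Perm (Fin (2 * e))
  hinv : ∀ h, α (α h) = h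
  hfpf : ∀ h, α h ≠ h
  htrans : ∀ h h', ∃ p ∈ Subgroup.closure ({α, σ} : Set (Equiv.Perm (Fin (2 * e)))), p h = h'
  hgenus : (permCycleCount σ : ℤ) - e + permCycleCount (σ⁻¹ * α) = 2 - 2 * g

/-- A vertex-labeled ribbon graph on `Fin (2*e)`. -/
structure LMap (e g n : ℕ) where
  α : Equiv.Perm (Fin (2 * e))
  σ : Equiv.Perm (Fin (2 * e))
  hinv : ∀ h, α (α h) = h
  hfpf : ∀ h, α h ≠ h
  htrans : ∀ h h', ∃ p ∈ Subgroup.closure ({α, σ} : Set (Equiv.Perm (Fin (2 * e)))), p h = h'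
  hgenus : (permCycleCount σ : ℤ) - e + permCycleCount (σ⁻¹ * α) = 2 - 2 * g
  v : Fin (2 * e) → Fin n
  hvσ : ∀ h, v (σ h) = v h
  horb : ∀ h h', v h = v h' → σ.SameCycle h h'
  hsurj : ∀ i, ∃ h, v h = i

/-- A decorated marked graph without the decoration. -/
structure VMap (g n : ℕ) (μ : Fin n → ℕ) where
  α : Equiv.Perm (Fin (∑ i, μ i))
  σ : Equiv.Perm (Fin (∑ i, μ i))
  hinv : ∀ h, α (α h) = h
  hfpf : ∀ h, α h ≠ h
  htrans : ∀ h h', ∃ p ∈ Subgroup.closure ({α, σ} : Set (Equiv.Perm (Fin (∑ i, μ i)))), p h = h'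
  v : Fin (∑ i, μ i) → Fin n
  hvσ : ∀ h, v (σ h) = v h
  horb : ∀ h h', v h = v h' → σ.SameCycle h h'
  hdeg : ∀ i, (Finset.univ.filter fun h => v h = i).card = μ i
  hgenus : 2 * (permCycleCount σ : ℤ) - (∑ i, μ i : ℤ) + 2 * (permCycleCount (σ⁻¹ * α) : ℤ)
      = 4 - 4 * g

lemma RootedMap.ext' {e g : ℕ} {p q : RootedMap e g} (h1 : p.α = q.α) (h2 : p.σ = q.σ)
    (h3 : p.root = q.root) : p = q := by
  cases p; cases q
  simp only at h1 h2 h3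
  subst h1; subst h2; subst h3; rfl

lemma PairMap.ext' {e g : ℕ} {p q : PairMap e g} (h1 : p.α = q.α) (h2 : p.σ = q.σ) : p = q := by
  cases p; cases q
  simp only at h1 h2
  subst h1; subst h2; rfl

lemma LMap.ext' {e g n : ℕ} {p q : LMap e g n} (h1 : p.α = q.α) (h2 : p.σ = q.σ)
    (h3 : p.v = q.v) : p = q := by
  cases p; cases q
  simp only at h1 h2 h3
  subst h1; subst h2; subst h3; rfl

lemma VMap.ext' {g n : ℕ} {μ : Fin n → ℕ} {p q : VMap g n μ} (h1 : p.α = q.α) (h2 : p.σ = q.σ)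
    (h3 : p.v = q.v) : p = q := by
  cases p; cases q
  simp only at h1 h2 h3
  subst h1; subst h2; subst h3; rfl

lemma DecMap.ext' {g n : ℕ} {μ : Fin n → ℕ} {p q : DecMap g n μ} (h1 : p.α = q.α)
    (h2 : p.σ = q.σ) (h3 : p.v = q.v) (h4 : p.dec = q.dec) : p = q := by
  cases p; cases q
  simp only at h1 h2 h3 h4
  subst h1; subst h2; subst h3; subst h4; rfl

instance {e g : ℕ} : Finite (RootedMap e g) :=
  Finite.of_injective (fun Γ => (Γ.α, Γ.σ, Γ.root)) fun p q h => by
    simp only [Prod.mk.injEq] at h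
    exact RootedMap.ext' h.1 h.2.1 h.2.2

instance {e g : ℕ} : Finite (PairMap e g) :=
  Finite.of_injective (fun Γ => (Γ.α, Γ.σ)) fun p q h => by
    simp only [Prod.mk.injEq] at h
    exact PairMap.ext' h.1 h.2

instance {e g n : ℕ} : Finite (LMap e g n) :=
  Finite.of_injective (fun Γ => (Γ.α, Γ.σ, Γ.v)) fun p q h => by
    simp only [Prod.mk.injEq] at h
    exact LMap.ext' h.1 h.2.1 h.2.2

instance {g n : ℕ} {μ : Fin n → ℕ} : Finite (VMap g n μ) :=
  Finite.of_injective (fun Γ => (Γ.α, Γ.σ, Γ.v)) fun p q h => by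
    simp only [Prod.mk.injEq] at h
    exact VMap.ext' h.1 h.2.1 h.2.2

instance {g n : ℕ} {μ : Fin n → ℕ} : Finite (DecMap g n μ) :=
  Finite.of_injective (fun Γ => (Γ.α, Γ.σ, Γ.v, Γ.dec)) fun p q h => by
    simp only [Prod.mk.injEq] at h
    exact DecMap.ext' h.1 h.2.1 h.2.2.1 h.2.2.2

/-! ### Group actions on rooted and decorated maps -/

instance rootedSMul {e g : ℕ} : SMul (Equiv.Perm (Fin (2 * e))) (RootedMap e g) where
  smul ψ Γ :=
    { α := ψ * Γ.α * ψ⁻¹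
      σ := ψ * Γ.σ * ψ⁻¹
      hinv := by rw [← pcm_perm]; exact hinv_pcm Γ.hinv ψ
      hfpf := by rw [← pcm_perm]; exact hfpf_pcm Γ.hfpf ψ
      htrans := by rw [← pcm_perm, ← pcm_perm]; exact htrans_pcm Γ.htrans ψ
      hgenus := by
        rw [conj_inv_mul, permCycleCount_conj, permCycleCount_conj]
        exact Γ.hgenus
      root := ψ Γ.root }

@[simp] lemma rootedSMul_α {e g : ℕ} (ψ : Equiv.Perm (Fin (2 * e))) (Γ : RootedMap e g) :
    (ψ • Γ).α = ψ * Γ.α * ψ⁻¹ := rfl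
@[simp] lemma rootedSMul_σ {e g : ℕ} (ψ : Equiv.Perm (Fin (2 * e))) (Γ : RootedMap e g) :
    (ψ • Γ).σ = ψ * Γ.σ * ψ⁻¹ := rfl
@[simp] lemma rootedSMul_root {e g : ℕ} (ψ : Equiv.Perm (Fin (2 * e))) (Γ : RootedMap e g) :
    (ψ • Γ).root = ψ Γ.root := rfl

instance rootedAction {e g : ℕ} : MulAction (Equiv.Perm (Fin (2 * e))) (RootedMap e g) where
  one_smul Γ := RootedMap.ext' (by simp) (by simp) (by simp)
  mul_smul ψ φ Γ := RootedMap.ext' (by simp [mul_assoc]) (by simp [mul_assoc]) (by simp)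

instance decSMul {g n : ℕ} {μ : Fin n → ℕ} :
    SMul (Equiv.Perm (Fin (∑ i, μ i))) (DecMap g n μ) where
  smul ψ Γ :=
    { α := ψ * Γ.α * ψ⁻¹
      σ := ψ * Γ.σ * ψ⁻¹
      hinv := by rw [← pcm_perm]; exact hinv_pcm Γ.hinv ψ
      hfpf := by rw [← pcm_perm]; exact hfpf_pcm Γ.hfpf ψ
      htrans := by rw [← pcm_perm, ← pcm_perm]; exact htrans_pcm Γ.htrans ψ
      v := fun h => Γ.v (ψ⁻¹ h)
      hvσ := fun h => by
        simp only [Equiv.Perm.mul_apply, Equiv.Perm.inv_def, Equiv.symm_apply_apply]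
        exact Γ.hvσ _
      horb := fun h h' hv => by
        rw [← pcm_perm]
        have := Γ.horb _ _ hv
        have h2 := (sameCycle_pcm_iff (ψ : Equiv.Perm (Fin (∑ i, μ i))) Γ.σ (ψ⁻¹ h) (ψ⁻¹ h')).mpr this
        simpa using h2
      hdeg := fun i => by
        rw [← Γ.hdeg i]
        exact Finset.card_equiv ψ⁻¹ (fun x => by simp)
      dec := fun i => ψ (Γ.dec i)
      hdec := fun i => by simp [Γ.hdec i]
      hgenus := by
        rw [conj_inv_mul, permCycleCount_conj, permCycleCount_conj]
        exact Γ.hgenus }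

@[simp] lemma decSMul_α {g n : ℕ} {μ : Fin n → ℕ} (ψ : Equiv.Perm (Fin (∑ i, μ i)))
    (Γ : DecMap g n μ) : (ψ • Γ).α = ψ * Γ.α * ψ⁻¹ := rfl
@[simp] lemma decSMul_σ {g n : ℕ} {μ : Fin n → ℕ} (ψ : Equiv.Perm (Fin (∑ i, μ i)))
    (Γ : DecMap g n μ) : (ψ • Γ).σ = ψ * Γ.σ * ψ⁻¹ := rfl
@[simp] lemma decSMul_v {g n : ℕ} {μ : Fin n → ℕ} (ψ : Equiv.Perm (Fin (∑ i, μ i)))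
    (Γ : DecMap g n μ) : (ψ • Γ).v = fun h => Γ.v (ψ⁻¹ h) := rfl
@[simp] lemma decSMul_dec {g n : ℕ} {μ : Fin n → ℕ} (ψ : Equiv.Perm (Fin (∑ i, μ i)))
    (Γ : DecMap g n μ) : (ψ • Γ).dec = fun i => ψ (Γ.dec i) := rfl

instance decAction {g n : ℕ} {μ : Fin n → ℕ} :
    MulAction (Equiv.Perm (Fin (∑ i, μ i))) (DecMap g n μ) where
  one_smul Γ := DecMap.ext' (by simp) (by simp) (by ext h; simp) (by simp)
  mul_smul ψ φ Γ := DecMap.ext' (by simp [mul_assoc]) (by simp [mul_assoc])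
    (by ext h; simp [mul_assoc]) (by simp)

/-! ### Counting orbits: `m1` and `Cgn` -/

lemma m1_mul_factorial (e g : ℕ) :
    m1 e g * Nat.factorial (2 * e) = Nat.card (RootedMap e g) := by
  classical
  have hfree : ∀ (ψ : Equiv.Perm (Fin (2 * e))) (Γ : RootedMap e g), ψ • Γ = Γ → ψ = 1 := by
    intro ψ Γ hψ
    have hα : ψ * Γ.α * ψ⁻¹ = Γ.α := congrArg RootedMap.α hψ
    have hσ : ψ * Γ.σ * ψ⁻¹ = Γ.σ := congrArg RootedMap.σ hψ
    have hroot : ψ Γ.root = Γ.root := congrArg RootedMap.root hψ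
    exact perm_eq_one_of_commute_fix Γ.htrans
      (mul_inv_eq_iff_eq_mul.mp hα) (mul_inv_eq_iff_eq_mul.mp hσ) hroot
  have hrel : ∀ Γ Γ' : RootedMap e g,
      RootedMapRel e g Γ Γ' ↔ ∃ ψ : Equiv.Perm (Fin (2 * e)), ψ • Γ = Γ' := by
    intro Γ Γ'
    constructor
    · rintro ⟨ψ, h1, h2, h3⟩
      refine ⟨ψ, RootedMap.ext' ?_ ?_ h3⟩
      · exact mul_inv_eq_iff_eq_mul.mpr h1
      · exact mul_inv_eq_iff_eq_mul.mpr h2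
    · rintro ⟨ψ, rfl⟩
      exact ⟨ψ, (mul_inv_eq_iff_eq_mul.mp rfl), (mul_inv_eq_iff_eq_mul.mp rfl), rfl⟩
  have := card_quot_free hfree
  have hcard : Nat.card (Equiv.Perm (Fin (2 * e))) = Nat.factorial (2 * e) := by
    rw [Nat.card_eq_fintype_card, Fintype.card_perm, Fintype.card_fin]
  rw [← this, hcard]
  congr 1
  unfold m1
  exact Nat.card_congr (Quot.congrRight hrel)

lemma Cgn_mul_factorial (g n : ℕ) (μ : Fin n → ℕ) (hpos : ∀ i, 1 ≤ μ i) :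
    Cgn g n μ * Nat.factorial (∑ i, μ i) = Nat.card (DecMap g n μ) := by
  classical
  have hfree : ∀ (ψ : Equiv.Perm (Fin (∑ i, μ i))) (Γ : DecMap g n μ), ψ • Γ = Γ → ψ = 1 := by
    intro ψ Γ hψ
    have hα : ψ * Γ.α * ψ⁻¹ = Γ.α := congrArg DecMap.α hψ
    have hσ : ψ * Γ.σ * ψ⁻¹ = Γ.σ := congrArg DecMap.σ hψ
    rcases isEmpty_or_nonempty (Fin (∑ i, μ i)) with hE | hNE
    · exact Equiv.ext fun x => (hE.false x).elim
    · obtain ⟨h0⟩ := hNE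
      have hdec : ψ (Γ.dec (Γ.v h0)) = Γ.dec (Γ.v h0) := by
        have := congrArg DecMap.dec hψ
        exact congrFun this (Γ.v h0)
      exact perm_eq_one_of_commute_fix Γ.htrans
        (mul_inv_eq_iff_eq_mul.mp hα) (mul_inv_eq_iff_eq_mul.mp hσ) hdec
  have hrel : ∀ Γ Γ' : DecMap g n μ,
      DecMapRel g n μ Γ Γ' ↔ ∃ ψ : Equiv.Perm (Fin (∑ i, μ i)), ψ • Γ = Γ' := by
    intro Γ Γ'
    constructor
    · rintro ⟨ψ, h1, h2, h3, h4⟩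
      refine ⟨ψ, DecMap.ext' ?_ ?_ ?_ ?_⟩
      · exact mul_inv_eq_iff_eq_mul.mpr h1
      · exact mul_inv_eq_iff_eq_mul.mpr h2
      · ext h
        simp only [decSMul_v]
        rw [← h3 (ψ⁻¹ h)]
        simp
      · simp only [decSMul_dec]; exact funext fun i => h4 i
    · rintro ⟨ψ, rfl⟩
      refine ⟨ψ, (mul_inv_eq_iff_eq_mul.mp rfl), (mul_inv_eq_iff_eq_mul.mp rfl),
        fun h => by simp, fun i => rfl⟩
  have := card_quot_free hfree
  rw [← this]
  have hcard : Nat.card (Equiv.Perm (Fin (∑ i, μ i))) = Nat.factorial (∑ i, μ i) := by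
    rw [Nat.card_eq_fintype_card, Fintype.card_perm, Fintype.card_fin]
  rw [hcard]
  congr 1
  unfold Cgn
  exact Nat.card_congr (Quot.congrRight hrel)


/-! ### Structural equivalences -/

/-- Forget the root. -/
def rootedToPair {e g : ℕ} (Γ : RootedMap e g) : PairMap e g :=
  ⟨Γ.α, Γ.σ, Γ.hinv, Γ.hfpf, Γ.htrans, Γ.hgenus⟩

lemma card_RootedMap (e g : ℕ) :
    Nat.card (RootedMap e g) = Nat.card (PairMap e g) * (2 * e) := by
  have E : RootedMap e g ≃ PairMap e g × Fin (2 * e) :=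
    { toFun := fun Γ => (rootedToPair Γ, Γ.root)
      invFun := fun pq => ⟨pq.1.α, pq.1.σ, pq.1.hinv, pq.1.hfpf, pq.1.htrans, pq.1.hgenus, pq.2⟩
      left_inv := fun Γ => rfl
      right_inv := fun pq => rfl }
  rw [Nat.card_congr E, Nat.card_prod]
  congr 1
  rw [Nat.card_eq_fintype_card, Fintype.card_fin]

lemma pcc_pos {H : Type*} [Finite H] [Nonempty H] (σ : Equiv.Perm H) :
    1 ≤ permCycleCount σ := by
  haveI : Nonempty (Quot σ.SameCycle) := ⟨Quot.mk _ (Classical.arbitrary H)⟩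
  haveI : Finite (Quot σ.SameCycle) := Quot.finite _
  exact Nat.card_pos

lemma pairmap_count_mem {e g : ℕ} (he : 1 ≤ e) (p : PairMap e g) :
    permCycleCount p.σ ∈ Finset.Icc 1 (e + 1) := by
  haveI : Nonempty (Fin (2 * e)) := ⟨⟨0, by omega⟩⟩
  have h1 : 1 ≤ permCycleCount p.σ := pcc_pos _
  have h2 : 1 ≤ permCycleCount (p.σ⁻¹ * p.α) := pcc_pos _
  have hgen := p.hgenus
  refine Finset.mem_Icc.mpr ⟨h1, ?_⟩
  omega

lemma card_PairMap_sum (e g : ℕ) (he : 1 ≤ e) :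
    Nat.card (PairMap e g) =
      ∑ n ∈ Finset.Icc 1 (e + 1), Nat.card {p : PairMap e g // permCycleCount p.σ = n} := by
  classical
  exact card_eq_sum_fiber _ _ (pairmap_count_mem he)

/-! ### The fiber of `LMap → PairMap` -/

/-- Forget the labeling. -/
def lmapToPair {e g n : ℕ} (L : LMap e g n) : PairMap e g :=
  ⟨L.α, L.σ, L.hinv, L.hfpf, L.htrans, L.hgenus⟩

lemma lmap_quot_lift_bij {e g n : ℕ} (L : LMap e g n) :
    Function.Bijective (Quot.lift L.v (v_const_of_sameCycle L.hvσ)) := by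
  constructor
  · intro x y
    induction x using Quot.ind with | _ a =>
    induction y using Quot.ind with | _ b =>
    intro h
    exact Quot.sound (L.horb a b h)
  · intro i
    obtain ⟨h, hh⟩ := L.hsurj i
    exact ⟨Quot.mk _ h, hh⟩

lemma lmap_cyclecount {e g n : ℕ} (L : LMap e g n) : permCycleCount L.σ = n := by
  rw [permCycleCount, Nat.card_congr (Equiv.ofBijective _ (lmap_quot_lift_bij L)),
    Nat.card_eq_fintype_card, Fintype.card_fin]

/-- The fiber of `lmapToPair` over `p` is the set of bijective labelings of the
cycles of `p.σ`. -/
noncomputable def lmapFiberEquiv {e g n : ℕ} (p : PairMap e g) :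
    {L : LMap e g n // lmapToPair L = p} ≃ (Quot p.σ.SameCycle ≃ Fin n) where
  toFun := fun Lh =>
    Equiv.ofBijective
      (Quot.lift Lh.1.v (fun a b hab => v_const_of_sameCycle Lh.1.hvσ a b
        (by rw [show Lh.1.σ = p.σ from congrArg PairMap.σ Lh.2]; exact hab)))
      (by
        have hσ : Lh.1.σ = p.σ := congrArg PairMap.σ Lh.2
        constructor
        · intro x y
          induction x using Quot.ind with | _ a =>
          induction y using Quot.ind with | _ b =>
          intro h
          refine Quot.sound ?_
          rw [← hσ]
          exact Lh.1.horb a b h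
        · intro i
          obtain ⟨h, hh⟩ := Lh.1.hsurj i
          exact ⟨Quot.mk _ h, hh⟩)
  invFun := fun b =>
    ⟨{ α := p.α
       σ := p.σ
       hinv := p.hinv
       hfpf := p.hfpf
       htrans := p.htrans
       hgenus := p.hgenus
       v := fun h => b (Quot.mk _ h)
       hvσ := fun h => congrArg b (Quot.sound ⟨-1, by simp⟩)
       horb := fun h h' hv => sameCycle_of_quot_eq (b.injective hv)
       hsurj := fun i => by
         obtain ⟨q0, hq⟩ := b.surjective i
         induction q0 using Quot.ind with | _ a =>
         exact ⟨a, hq⟩ }, rfl⟩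
  left_inv := fun Lh => by
    refine Subtype.ext (LMap.ext' ?_ ?_ ?_)
    · exact (congrArg PairMap.α Lh.2).symm
    · exact (congrArg PairMap.σ Lh.2).symm
    · exact funext fun h => rfl
  right_inv := fun b => by
    refine Equiv.ext fun q0 => ?_
    induction q0 using Quot.ind with | _ h =>
    rfl

lemma card_LMap_pair (e g n : ℕ) :
    Nat.card (LMap e g n) =
      Nat.card {p : PairMap e g // permCycleCount p.σ = n} * Nat.factorial n := by
  classical
  refine card_eq_card_fiber_mul
    (fun L => (⟨lmapToPair L, lmap_cyclecount L⟩ :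
      {p : PairMap e g // permCycleCount p.σ = n})) _ fun q => ?_
  have E1 : {L : LMap e g n //
      (⟨lmapToPair L, lmap_cyclecount L⟩ : {p : PairMap e g // permCycleCount p.σ = n}) = q}
      ≃ {L : LMap e g n // lmapToPair L = q.1} :=
    Equiv.subtypeEquivRight fun L => by
      rw [Subtype.ext_iff]
  rw [Nat.card_congr (E1.trans (lmapFiberEquiv q.1))]
  haveI : Fintype (Quot q.1.σ.SameCycle) := Fintype.ofFinite _
  letI := Classical.decEq (Quot q.1.σ.SameCycle)
  have hcard : Fintype.card (Quot q.1.σ.SameCycle) = n := by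
    rw [← Nat.card_eq_fintype_card]
    exact q.2
  rw [Nat.card_eq_fintype_card, Fintype.card_equiv (Fintype.equivFinOfCardEq hcard), hcard]

/-! ### The fiber of `LMap → compositions` -/

/-- The degree sequence of a labeled map. -/
def degfun {e g n : ℕ} (L : LMap e g n) : Fin n → ℕ :=
  fun i => (Finset.univ.filter fun h => L.v h = i).card

lemma degfun_mem {e g n : ℕ} (L : LMap e g n) : degfun L ∈ comps n (2 * e) := by
  classical
  refine Finset.mem_filter.mpr ⟨Finset.Nat.mem_antidiagonalTuple.mpr ?_, fun i => ?_⟩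
  · rw [show (2 * e) = (Finset.univ : Finset (Fin (2 * e))).card by
      rw [Finset.card_univ, Fintype.card_fin]]
    exact (Finset.card_eq_sum_card_fiberwise fun x _ => Finset.mem_univ (L.v x)).symm
  · obtain ⟨h, hh⟩ := L.hsurj i
    exact Finset.card_pos.mpr ⟨h, Finset.mem_filter.mpr ⟨Finset.mem_univ _, hh⟩⟩

/-- For a composition `μ` of `2e`, labeled maps with degree sequence `μ` are the
same as `VMap`s. -/
def vmapFiberEquiv {e g n : ℕ} {μ : Fin n → ℕ} (hsum : ∑ i, μ i = 2 * e)
    (hpos : ∀ i, 1 ≤ μ i) :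
    {L : LMap e g n // degfun L = μ} ≃ VMap g n μ where
  toFun := fun Lh =>
    { α := pcm (finCongr hsum.symm) Lh.1.α
      σ := pcm (finCongr hsum.symm) Lh.1.σ
      hinv := hinv_pcm Lh.1.hinv _
      hfpf := hfpf_pcm Lh.1.hfpf _
      htrans := htrans_pcm Lh.1.htrans _
      v := fun h => Lh.1.v ((finCongr hsum.symm).symm h)
      hvσ := fun h => by
        simp only [pcm_apply, Equiv.symm_apply_apply]
        exact Lh.1.hvσ _
      horb := fun h h' hv => by
        have := Lh.1.horb _ _ hv
        have h2 := (sameCycle_pcm_iff (finCongr hsum.symm) Lh.1.σ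
          ((finCongr hsum.symm).symm h) ((finCongr hsum.symm).symm h')).mpr this
        simpa using h2
      hdeg := fun i => by
        rw [← congrFun Lh.2 i]
        exact Finset.card_equiv (finCongr hsum.symm).symm fun x => by simp
      hgenus := by
        rw [pcm_inv_mul, permCycleCount_pcm, permCycleCount_pcm]
        have h2e : ((∑ i, μ i : ℕ) : ℤ) = 2 * (e : ℤ) := by exact_mod_cast hsum
        have hgen := Lh.1.hgenus
        push_cast at h2e ⊢
        linarith }
  invFun := fun Γ =>
    ⟨{ α := pcm (finCongr hsum.symm).symm Γ.α
       σ := pcm (finCongr hsum.symm).symm Γ.σ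
       hinv := hinv_pcm Γ.hinv _
       hfpf := hfpf_pcm Γ.hfpf _
       htrans := htrans_pcm Γ.htrans _
       hgenus := by
         rw [pcm_inv_mul, permCycleCount_pcm, permCycleCount_pcm]
         have h2e : ((∑ i, μ i : ℕ) : ℤ) = 2 * (e : ℤ) := by exact_mod_cast hsum
         have hgen := Γ.hgenus
         push_cast at h2e hgen ⊢
         linarith
       v := fun h => Γ.v ((finCongr hsum.symm) h)
       hvσ := fun h => by
         simp only [pcm_apply, Equiv.symm_symm, Equiv.symm_apply_apply]
         exact Γ.hvσ _
       horb := fun h h' hv => by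
         have := Γ.horb _ _ hv
         have h2 := (sameCycle_pcm_iff (finCongr hsum.symm).symm Γ.σ
           ((finCongr hsum.symm) h) ((finCongr hsum.symm) h')).mpr this
         simpa using h2
       hsurj := fun i => by
         have hpos' : 0 < (Finset.univ.filter fun h => Γ.v h = i).card := by
           rw [Γ.hdeg i]; exact hpos i
         obtain ⟨h0, hh0⟩ := Finset.card_pos.mp hpos'
         exact ⟨(finCongr hsum.symm).symm h0, by
           simpa using (Finset.mem_filter.mp hh0).2⟩ },
     funext fun i => by
       rw [show μ i = (Finset.univ.filter fun h => Γ.v h = i).card from (Γ.hdeg i).symm]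
       exact Finset.card_equiv (finCongr hsum.symm) fun x => by simp [degfun]⟩
  left_inv := fun Lh => by
    refine Subtype.ext (LMap.ext' (pcm_symm_pcm _ _) (pcm_symm_pcm _ _) ?_)
    exact funext fun h => congrArg Lh.1.v (by simp)
  right_inv := fun Γ => by
    refine VMap.ext' (pcm_pcm_symm _ _) (pcm_pcm_symm _ _) ?_
    exact funext fun h => congrArg Γ.v (by simp)

lemma card_LMap_comps (e g n : ℕ) :
    Nat.card (LMap e g n) = ∑ μ ∈ comps n (2 * e), Nat.card (VMap g n μ) := by
  classical
  rw [card_eq_sum_fiber degfun (comps n (2 * e)) degfun_mem]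
  refine Finset.sum_congr rfl fun μ hμ => ?_
  have hμ' := Finset.mem_filter.mp hμ
  exact Nat.card_congr (vmapFiberEquiv (Finset.Nat.mem_antidiagonalTuple.mp hμ'.1) hμ'.2)

/-! ### The fiber of `DecMap → VMap` -/

/-- Forget the decoration. -/
def decToVMap {g n : ℕ} {μ : Fin n → ℕ} (Δ : DecMap g n μ) : VMap g n μ :=
  ⟨Δ.α, Δ.σ, Δ.hinv, Δ.hfpf, Δ.htrans, Δ.v, Δ.hvσ, Δ.horb, Δ.hdeg, Δ.hgenus⟩

def decFiberEquiv {g n : ℕ} {μ : Fin n → ℕ} (Γ : VMap g n μ) :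
    {Δ : DecMap g n μ // decToVMap Δ = Γ} ≃ (∀ i, {h // Γ.v h = i}) where
  toFun := fun Δh => fun i =>
    ⟨Δh.1.dec i, by
      rw [show Γ.v = Δh.1.v from (congrArg VMap.v Δh.2).symm]
      exact Δh.1.hdec i⟩
  invFun := fun d =>
    ⟨{ α := Γ.α, σ := Γ.σ, hinv := Γ.hinv, hfpf := Γ.hfpf, htrans := Γ.htrans,
       v := Γ.v, hvσ := Γ.hvσ, horb := Γ.horb, hdeg := Γ.hdeg,
       dec := fun i => (d i).1, hdec := fun i => (d i).2, hgenus := Γ.hgenus }, rfl⟩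
  left_inv := fun Δh => by
    refine Subtype.ext (DecMap.ext' ?_ ?_ ?_ ?_)
    · exact (congrArg VMap.α Δh.2).symm
    · exact (congrArg VMap.σ Δh.2).symm
    · exact (congrArg VMap.v Δh.2).symm
    · exact funext fun i => rfl
  right_inv := fun d => funext fun i => Subtype.ext rfl

lemma card_DecMap (g n : ℕ) (μ : Fin n → ℕ) :
    Nat.card (DecMap g n μ) = Nat.card (VMap g n μ) * ∏ i, μ i := by
  classical
  refine card_eq_card_fiber_mul decToVMap _ fun Γ => ?_
  rw [Nat.card_congr (decFiberEquiv Γ), Nat.card_pi]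
  refine Finset.prod_congr rfl fun i _ => ?_
  rw [Nat.card_eq_fintype_card, Fintype.card_subtype, Γ.hdeg i]

/-- the Walsh–Lehman formula for the number of rooted maps of
genus `g` with `e` edges in terms of the numbers `C_{g,n}(μ₁,…,μₙ)`. -/
theorem stmt5 (e : ℕ) (he : 1 ≤ e) (g : ℕ) :
    (m1 e g : ℚ) =
      ∑ n ∈ Finset.Icc 1 (e + 1),
        (2 * e / (Nat.factorial n) : ℚ) *
          ∑ μ ∈ comps n (2 * e), (Cgn g n μ : ℚ) / ∏ i, (μ i : ℚ) := by
  classical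
  have hF : (((2 * e).factorial : ℚ)) ≠ 0 := Nat.cast_ne_zero.mpr (Nat.factorial_ne_zero _)
  have inner : ∀ n : ℕ, ∀ μ ∈ comps n (2 * e),
      (Cgn g n μ : ℚ) / ∏ i, (μ i : ℚ)
        = (Nat.card (VMap g n μ) : ℚ) / ((2 * e).factorial : ℚ) := by
    intro n μ hμ
    have hμ' := Finset.mem_filter.mp hμ
    have hsum := Finset.Nat.mem_antidiagonalTuple.mp hμ'.1
    have hpos := hμ'.2
    have h1 := Cgn_mul_factorial g n μ hpos
    rw [hsum] at h1
    have h2 := card_DecMap g n μ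
    have hprod : (∏ i, (μ i : ℚ)) ≠ 0 :=
      Finset.prod_ne_zero_iff.mpr fun i _ =>
        Nat.cast_ne_zero.mpr (by have := hpos i; omega)
    rw [div_eq_div_iff hprod hF]
    have h3 : Cgn g n μ * (2 * e).factorial = Nat.card (VMap g n μ) * ∏ i, μ i :=
      h1.trans h2
    exact_mod_cast h3
  have step1 : ∀ n ∈ Finset.Icc 1 (e + 1),
      (2 * e / (Nat.factorial n) : ℚ) *
          ∑ μ ∈ comps n (2 * e), (Cgn g n μ : ℚ) / ∏ i, (μ i : ℚ)
        = 2 * e * (Nat.card {p : PairMap e g // permCycleCount p.σ = n} : ℚ)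
            / ((2 * e).factorial : ℚ) := by
    intro n hn
    rw [Finset.sum_congr rfl (fun μ hμ => inner n μ hμ), ← Finset.sum_div, ← Nat.cast_sum,
      ← card_LMap_comps e g n, card_LMap_pair e g n]
    have hn0 : ((n.factorial : ℚ)) ≠ 0 := Nat.cast_ne_zero.mpr (Nat.factorial_ne_zero _)
    push_cast
    field_simp
  rw [Finset.sum_congr rfl step1]
  have hsum2 : ∑ n ∈ Finset.Icc 1 (e + 1),
      2 * (e : ℚ) * (Nat.card {p : PairMap e g // permCycleCount p.σ = n} : ℚ)
        / ((2 * e).factorial : ℚ)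
      = 2 * e * (Nat.card (PairMap e g) : ℚ) / ((2 * e).factorial : ℚ) := by
    rw [← Finset.sum_div, ← Finset.mul_sum, ← Nat.cast_sum, ← card_PairMap_sum e g he]
  rw [hsum2, eq_div_iff hF]
  have hm := m1_mul_factorial e g
  rw [card_RootedMap] at hm
  have : (m1 e g : ℚ) * ((2 * e).factorial : ℚ)
      = (Nat.card (PairMap e g) : ℚ) * (2 * e) := by exact_mod_cast hm
  rw [this]
  ring
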